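/- Let P be a finite poset, 2-wide, parity-graded with parity rank function μ, and downward Eulerian, and let g : P → ℝ be an injective discrete Morse function such that whenever z < x ≺ y < w and g(x) < g(y), then g(z) < g(y) and g(x) < g(w). For each b ∈ P, let T(b) be the set of nonempty chains C of P containing b on which g attains its maximum at b. If b is ordinary (not critical) for g, then Σ_{C ∈ T(b)} (−1)^{ℓ(C)} = 0. -/

import Mathlib

open Finset
open scoped Classical

variable {P : Type*}

/-- `P` is 2-wide: whenever `a ⋖ b ⋖ c` there is `d ≠ b` with `a ⋖ d ⋖ c`. -/
def TwoWide (P : Type*) [PartialOrder P] : Prop :=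
  ∀ a b c : P, a ⋖ b → b ⋖ c → ∃ d, d ≠ b ∧ a ⋖ d ∧ d ⋖ c

/-- `f` is a discrete Morse function. -/
def IsDMF [PartialOrder P] (f : P → ℝ) : Prop :=
  ∀ b : P, {a | a ⋖ b ∧ f b ≤ f a}.Subsingleton ∧ {c | b ⋖ c ∧ f c ≤ f b}.Subsingleton

/-- `b` is (discrete-)critical for `f`. -/
def IsCrit [PartialOrder P] (f : P → ℝ) (b : P) : Prop :=
  (∀ a, a ⋖ b → f a < f b) ∧ (∀ c, b ⋖ c → f b < f c)

/-- `μ` is a parity rank function. -/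
def ParityRank [PartialOrder P] (μ : P → ℕ) : Prop :=
  (∀ a, μ a ≤ 1) ∧ (∀ a, IsMin a → μ a = 0) ∧ ∀ a b : P, a ⋖ b → μ b = 1 - μ a

/-- Sum of `(-1)^(length C)` over all nonempty chains `C` of `P` satisfying `p`. -/
noncomputable def chainSum [PartialOrder P] [Fintype P] (p : Finset P → Prop) : ℤ :=
  ∑ C ∈ Finset.univ.filter
      (fun C : Finset P => C.Nonempty ∧ IsChain (· ≤ ·) (↑C : Set P) ∧ p C),
    (-1 : ℤ) ^ (C.card - 1)

/-- `P` is downward Eulerian with respect to `μ`. -/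
def DownEulerian [PartialOrder P] [Fintype P] (μ : P → ℕ) : Prop :=
  ∀ a : P, ¬ IsMin a →
    chainSum (fun C => ∀ x ∈ C, x < a) = (-1 : ℤ) ^ (μ a + 1) + 1

/-! ### Auxiliary machinery -/

section CoverExists
variable [PartialOrder P] [Fintype P]

lemma exists_cov_above {m x : P} (h : m < x) : ∃ u, m ⋖ u ∧ u ≤ x := by
  obtain ⟨u, hu, hmin⟩ : ∃ u ∈ Finset.univ.filter (fun z => m < z ∧ z ≤ x),
      ∀ z ∈ Finset.univ.filter (fun z => m < z ∧ z ≤ x), ¬ z < u := by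
    obtain ⟨u, hu⟩ := Finset.exists_minimal
      (s := Finset.univ.filter fun z => m < z ∧ z ≤ x) ⟨x, by simp [h]⟩
    exact ⟨u, hu.1, fun z hz hlt => hlt.not_ge (hu.2 hz hlt.le)⟩
  simp only [mem_filter, mem_univ, true_and] at hu hmin
  exact ⟨u, ⟨hu.1, fun z hz1 hz2 => hmin z ⟨hz1, hz2.le.trans hu.2⟩ hz2⟩, hu.2⟩

lemma exists_cov_below {y x : P} (h : y < x) : ∃ p, y ≤ p ∧ p ⋖ x := by
  obtain ⟨p, hp, hmax⟩ : ∃ p ∈ Finset.univ.filter (fun z => y ≤ z ∧ z < x),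
      ∀ z ∈ Finset.univ.filter (fun z => y ≤ z ∧ z < x), ¬ p < z := by
    obtain ⟨p, hp⟩ := Finset.exists_maximal
      (s := Finset.univ.filter fun z => y ≤ z ∧ z < x) ⟨y, by simp [h]⟩
    exact ⟨p, hp.1, fun z hz hlt => hlt.not_ge (hp.2 hz hlt.le)⟩
  simp only [mem_filter, mem_univ, true_and] at hp hmax
  exact ⟨p, hp.1, hp.2, fun c hc1 hc2 => hmax c ⟨hp.1.trans hc1.le, hc2⟩ hc1⟩

lemma chain_exists_max {C : Finset P} (hC : IsChain (· ≤ ·) (↑C : Set P))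
    (hne : C.Nonempty) : ∃ m ∈ C, ∀ y ∈ C, y ≤ m := by
  obtain ⟨m, hm, hmax⟩ : ∃ m ∈ C, ∀ z ∈ C, ¬ m < z := by
    obtain ⟨m, hm⟩ := Finset.exists_maximal hne
    exact ⟨m, hm.1, fun z hz hlt => hlt.not_ge (hm.2 hz hlt.le)⟩
  refine ⟨m, hm, fun y hy => ?_⟩
  rcases eq_or_ne y m with rfl | hne'
  · exact le_rfl
  · rcases hC hy hm hne' with h | h
    · exact h
    · exact (hmax y hy (lt_of_le_of_ne h hne'.symm)).elim

end CoverExists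

section Gsum
variable [PartialOrder P] [Fintype P]

/-- Sum of `(-1)^|C|` over all (possibly empty) chains of `P` contained in `s`. -/
noncomputable def gsum (s : Set P) : ℤ :=
  ∑ C ∈ Finset.univ.filter
      (fun C : Finset P => IsChain (· ≤ ·) (↑C : Set P) ∧ ∀ x ∈ C, x ∈ s),
    (-1 : ℤ) ^ C.card

lemma gsum_eq_sum {s : Set P} {F : Finset (Finset P)}
    (hF : ∀ C : Finset P, C ∈ F ↔ (IsChain (· ≤ ·) (↑C : Set P) ∧ ∀ x ∈ C, x ∈ s)) :
    gsum s = ∑ C ∈ F, (-1 : ℤ) ^ C.card := by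
  rw [gsum]
  refine Finset.sum_congr ?_ (fun _ _ => rfl)
  ext C
  simp only [mem_filter, mem_univ, true_and]
  exact (hF C).symm

lemma chainSum_eq_sum {p : Finset P → Prop} {F : Finset (Finset P)}
    (hF : ∀ C : Finset P, C ∈ F ↔ (C.Nonempty ∧ IsChain (· ≤ ·) (↑C : Set P) ∧ p C)) :
    chainSum p = ∑ C ∈ F, (-1 : ℤ) ^ (C.card - 1) := by
  rw [chainSum]
  refine Finset.sum_congr ?_ (fun _ _ => rfl)
  ext C
  simp only [mem_filter, mem_univ, true_and]
  exact (hF C).symm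

lemma gsum_of_forall_not {s : Set P} (h : ∀ x, x ∉ s) : gsum s = 1 := by
  have he : Finset.univ.filter
      (fun C : Finset P => IsChain (· ≤ ·) (↑C : Set P) ∧ ∀ x ∈ C, x ∈ s) = {∅} := by
    ext C
    simp only [mem_filter, mem_univ, true_and, mem_singleton]
    constructor
    · rintro ⟨-, h2⟩
      rcases C.eq_empty_or_nonempty with rfl | ⟨x, hx⟩
      · rfl
      · exact absurd (h2 x hx) (h x)
    · rintro rfl
      exact ⟨by simp, by simp⟩
  rw [gsum, he, sum_singleton, card_empty, pow_zero]

lemma gsum_cone {s : Set P} {u : P} (hu : u ∈ s)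
    (hc : ∀ x ∈ s, x ≤ u ∨ u ≤ x) : gsum s = 0 := by
  rw [gsum]
  refine Finset.sum_involution
    (fun C _ => if u ∈ C then C.erase u else insert u C) ?_ ?_ ?_ ?_
  · intro C hC
    by_cases h : u ∈ C
    · simp only [h, if_true]
      have hc' : C.card = (C.erase u).card + 1 := (Finset.card_erase_add_one h).symm
      rw [hc', pow_succ]
      ring
    · simp only [h, if_false]
      rw [Finset.card_insert_of_notMem h, pow_succ]
      ring
  · intro C hC _
    by_cases h : u ∈ C <;> simp only [h, if_true, if_false]
    · intro heq
      exact (heq ▸ Finset.notMem_erase u C) h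
    · intro heq
      exact h (heq ▸ Finset.mem_insert_self u C)
  · intro C hC
    simp only [mem_filter, mem_univ, true_and] at hC ⊢
    obtain ⟨hchain, hsub⟩ := hC
    by_cases h : u ∈ C <;> simp only [h, if_true, if_false]
    · exact ⟨hchain.mono (by simp [Finset.coe_subset, Finset.erase_subset]),
        fun x hx => hsub x (Finset.mem_of_mem_erase hx)⟩
    · refine ⟨?_, ?_⟩
      · rw [Finset.coe_insert]
        exact hchain.insert (fun b hb _ => (hc b (hsub b hb)).symm)
      · intro x hx
        rcases Finset.mem_insert.mp hx with rfl | hx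
        · exact hu
        · exact hsub x hx
  · intro C hC
    by_cases h : u ∈ C
    · simp [h, Finset.notMem_erase, Finset.insert_erase h]
    · simp [h, Finset.erase_insert h]

lemma gsum_union {s t : Set P} (hst : ∀ x ∈ s, ∀ y ∈ t, x < y) :
    gsum (s ∪ t) = gsum s * gsum t := by
  have hdisj : ∀ x, x ∈ s → x ∈ t → False := fun x hx hx' => lt_irrefl x (hst x hx x hx')
  rw [gsum, gsum, gsum, Finset.sum_mul_sum, ← Finset.sum_product']
  refine Finset.sum_nbij' (fun C => (C.filter (· ∈ s), C.filter (· ∈ t)))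
    (fun A => A.1 ∪ A.2) ?_ ?_ ?_ ?_ ?_
  · intro C hC
    simp only [mem_filter, mem_univ, true_and] at hC
    obtain ⟨hchain, hsub⟩ := hC
    simp only [Finset.mem_product, Finset.mem_filter, Finset.mem_univ, true_and]
    refine ⟨⟨?_, ?_⟩, ?_, ?_⟩
    · exact hchain.mono (Finset.coe_subset.mpr (Finset.filter_subset _ _))
    · exact fun x hx => hx.2
    · exact hchain.mono (Finset.coe_subset.mpr (Finset.filter_subset _ _))
    · exact fun x hx => hx.2
  · intro A hA
    simp only [Finset.mem_product, Finset.mem_filter, Finset.mem_univ, true_and] at hA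
    obtain ⟨⟨hc1, hs1⟩, hc2, hs2⟩ := hA
    simp only [Finset.mem_filter, Finset.mem_univ, true_and]
    refine ⟨?_, ?_⟩
    · intro x hx y hy hne
      rcases Finset.mem_union.mp hx with hx' | hx' <;>
        rcases Finset.mem_union.mp hy with hy' | hy'
      · exact hc1 hx' hy' hne
      · exact Or.inl (hst x (hs1 x hx') y (hs2 y hy')).le
      · exact Or.inr (hst y (hs1 y hy') x (hs2 x hx')).le
      · exact hc2 hx' hy' hne
    · intro x hx
      rcases Finset.mem_union.mp hx with h | h
      · exact Or.inl (hs1 x h)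
      · exact Or.inr (hs2 x h)
  · intro C hC
    simp only [mem_filter, mem_univ, true_and] at hC
    show C.filter (· ∈ s) ∪ C.filter (· ∈ t) = C
    ext x
    simp only [Finset.mem_union, Finset.mem_filter]
    constructor
    · rintro (⟨h, -⟩ | ⟨h, -⟩) <;> exact h
    · intro hx
      rcases hC.2 x hx with h | h
      · exact Or.inl ⟨hx, h⟩
      · exact Or.inr ⟨hx, h⟩
  · intro A hA
    simp only [Finset.mem_product, Finset.mem_filter, Finset.mem_univ, true_and] at hA
    obtain ⟨⟨-, hs1⟩, -, hs2⟩ := hA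
    show ((A.1 ∪ A.2).filter (· ∈ s), (A.1 ∪ A.2).filter (· ∈ t)) = A
    have e1 : (A.1 ∪ A.2).filter (· ∈ s) = A.1 := by
      ext x
      simp only [Finset.mem_filter, Finset.mem_union]
      constructor
      · rintro ⟨h1' | h1', h2'⟩
        · exact h1'
        · exact absurd h2' (fun h => hdisj x h (hs2 x h1'))
      · exact fun h => ⟨Or.inl h, hs1 x h⟩
    have e2 : (A.1 ∪ A.2).filter (· ∈ t) = A.2 := by
      ext x
      simp only [Finset.mem_filter, Finset.mem_union]
      constructor
      · rintro ⟨h1' | h1', h2'⟩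
        · exact absurd h2' (hdisj x (hs1 x h1'))
        · exact h1'
      · exact fun h => ⟨Or.inr h, hs2 x h⟩
    rw [e1, e2]
  · intro C hC
    simp only [mem_filter, mem_univ, true_and] at hC
    have hdc : Disjoint (C.filter (· ∈ s)) (C.filter (· ∈ t)) := by
      rw [Finset.disjoint_left]
      intro x hx1 hx2
      exact hdisj x (Finset.mem_filter.mp hx1).2 (Finset.mem_filter.mp hx2).2
    have ecard : C.card = (C.filter (· ∈ s)).card + (C.filter (· ∈ t)).card := by
      rw [← Finset.card_union_of_disjoint hdc]
      congr 1
      ext x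
      simp only [Finset.mem_union, Finset.mem_filter]
      constructor
      · intro hx
        rcases hC.2 x hx with h | h
        · exact Or.inl ⟨hx, h⟩
        · exact Or.inr ⟨hx, h⟩
      · rintro (⟨h, -⟩ | ⟨h, -⟩) <;> exact h
    rw [ecard, pow_add]

lemma chainSum_eq_sub_gsum (s : Set P) :
    chainSum (fun C : Finset P => ∀ x ∈ C, x ∈ s) = 1 - gsum s := by
  have hsplit : Finset.univ.filter
      (fun C : Finset P => IsChain (· ≤ ·) (↑C : Set P) ∧ ∀ x ∈ C, x ∈ s)
      = insert ∅ (Finset.univ.filter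
        (fun C : Finset P => C.Nonempty ∧ IsChain (· ≤ ·) (↑C : Set P) ∧ ∀ x ∈ C, x ∈ s)) := by
    ext C
    simp only [Finset.mem_filter, Finset.mem_univ, true_and, Finset.mem_insert]
    constructor
    · rintro ⟨h1, h2⟩
      rcases C.eq_empty_or_nonempty with rfl | hne
      · exact Or.inl rfl
      · exact Or.inr ⟨hne, h1, h2⟩
    · rintro (rfl | ⟨-, h1, h2⟩)
      · exact ⟨by simp, by simp⟩
      · exact ⟨h1, h2⟩
  have hnm : (∅ : Finset P) ∉ Finset.univ.filter
      (fun C : Finset P => C.Nonempty ∧ IsChain (· ≤ ·) (↑C : Set P) ∧ ∀ x ∈ C, x ∈ s) := by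
    simp [Finset.not_nonempty_empty]
  have hgs : gsum s = 1 + ∑ C ∈ Finset.univ.filter
      (fun C : Finset P => C.Nonempty ∧ IsChain (· ≤ ·) (↑C : Set P) ∧ ∀ x ∈ C, x ∈ s),
      (-1 : ℤ) ^ C.card := by
    have hgs0 : gsum s = ∑ C ∈ Finset.univ.filter
        (fun C : Finset P => IsChain (· ≤ ·) (↑C : Set P) ∧ ∀ x ∈ C, x ∈ s),
        (-1 : ℤ) ^ C.card :=
      gsum_eq_sum (fun C => by simp only [Finset.mem_filter, Finset.mem_univ, true_and])
    rw [hgs0, hsplit, Finset.sum_insert hnm, Finset.card_empty, pow_zero]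
  have hcs : chainSum (fun C : Finset P => ∀ x ∈ C, x ∈ s) = ∑ C ∈ Finset.univ.filter
      (fun C : Finset P => C.Nonempty ∧ IsChain (· ≤ ·) (↑C : Set P) ∧ ∀ x ∈ C, x ∈ s),
      (-1 : ℤ) ^ (C.card - 1) :=
    chainSum_eq_sum (fun C => by simp only [Finset.mem_filter, Finset.mem_univ, true_and])
  rw [hcs, hgs]
  have hterm : ∀ C ∈ Finset.univ.filter
      (fun C : Finset P => C.Nonempty ∧ IsChain (· ≤ ·) (↑C : Set P) ∧ ∀ x ∈ C, x ∈ s),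
      (-1 : ℤ) ^ (C.card - 1) = -(-1 : ℤ) ^ C.card := by
    intro C hC
    simp only [Finset.mem_filter] at hC
    have h1 : 1 ≤ C.card := Finset.card_pos.mpr hC.2.1
    have h2 : (-1 : ℤ) ^ C.card = (-1) ^ (C.card - 1) * (-1) := by
      rw [← pow_succ]
      congr 1
      omega
    rw [h2]
    ring
  rw [Finset.sum_congr rfl hterm, Finset.sum_neg_distrib]
  ring

end Gsum

section Claims
variable [PartialOrder P] [Fintype P]

lemma claimD (hw : TwoWide P) {g : P → ℝ} (hg : IsDMF g) (b : P) {m : P} {S : Set P}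
    (hSm : ∀ {y x : P}, m < y → y < x → x ∈ S → y ∈ S)
    (hSb : ∀ x ∈ S, g x ≠ g b) :
    ∀ x, x ∈ S → m < x → g x < g b → ∃ u, m ⋖ u ∧ g u < g b ∧ u ≤ x := by
  have : WellFoundedLT P := Finite.to_wellFoundedLT
  intro x
  refine WellFoundedLT.induction
    (motive := fun x => x ∈ S → m < x → g x < g b → ∃ u, m ⋖ u ∧ g u < g b ∧ u ≤ x) x ?_
  intro x IH hxS hmx hgx
  obtain ⟨u, hmu, hux⟩ := exists_cov_above hmx
  have huS : u ∈ S := by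
    rcases eq_or_lt_of_le hux with rfl | hlt
    · exact hxS
    · exact hSm hmu.lt hlt hxS
  rcases lt_or_gt_of_ne (hSb u huS) with hu | hu
  · exact ⟨u, hmu, hu, hux⟩
  · have hune : u ≠ x := by
      rintro rfl
      exact absurd hgx (asymm hu)
    have huxlt : u < x := hux.lt_of_ne hune
    obtain ⟨y, huy, hyx⟩ := exists_cov_below huxlt
    have hmy : m < y := hmu.lt.trans_le huy
    have hyS : y ∈ S := hSm hmy hyx.lt hxS
    rcases lt_or_gt_of_ne (hSb y hyS) with hy | hy
    · obtain ⟨u', h1, h2, h3⟩ := IH y hyx.lt hyS hmy hy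
      exact ⟨u', h1, h2, h3.trans hyx.lt.le⟩
    · obtain ⟨p, hmp, hpy⟩ := exists_cov_below hmy
      obtain ⟨d, hdy, hpd, hdx⟩ := hw p y x hpy hyx
      have hgd : g d < g x := by
        by_contra h
        push_neg at h
        exact hdy ((hg x).1 (Set.mem_setOf_eq ▸ ⟨hdx, h⟩)
          (Set.mem_setOf_eq ▸ ⟨hyx, (hgx.trans hy).le⟩))
      rcases eq_or_lt_of_le hmp with rfl | hmp'
      · exact ⟨d, hpd, hgd.trans hgx, hdx.lt.le⟩
      · have hmd : m < d := hmp'.trans hpd.lt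
        have hdS : d ∈ S := hSm hmd hdx.lt hxS
        obtain ⟨u', h1, h2, h3⟩ := IH d hdx.lt hdS hmd (hgd.trans hgx)
        exact ⟨u', h1, h2, h3.trans hdx.lt.le⟩

lemma claimN (hw : TwoWide P) {g : P → ℝ} (hg : IsDMF g) {a b m : P}
    (hab : a ⋖ b) (hga : g b < g a) (hmb : m < b) (hgm : g b < g m) (hma : m ≠ a) :
    ∃ x, m < x ∧ x < b ∧ g x < g b := by
  have hnotcov : ¬ m ⋖ b := fun h => hma ((hg b).1 ⟨h, hgm.le⟩ ⟨hab, hga.le⟩)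
  obtain ⟨x', hmx', hx'b⟩ := exists_cov_below hmb
  have hmx'lt : m < x' := lt_of_le_of_ne hmx' (fun h => hnotcov (h ▸ hx'b))
  by_cases hxa : x' = a
  · subst hxa
    obtain ⟨v, hmv, hva⟩ := exists_cov_below hmx'lt
    obtain ⟨d, hda, hvd, hdb⟩ := hw v x' b hva hab
    have hgd : g d < g b := by
      by_contra h
      push_neg at h
      exact hda ((hg b).1 ⟨hdb, h⟩ ⟨hab, hga.le⟩)
    exact ⟨d, lt_of_le_of_lt hmv hvd.lt, hdb.lt, hgd⟩
  · have hgx' : g x' < g b := by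
      by_contra h
      push_neg at h
      exact hxa ((hg b).1 ⟨hx'b, h⟩ ⟨hab, hga.le⟩)
    exact ⟨x', hmx'lt, hx'b.lt, hgx'⟩

lemma Vm_zero (hw : TwoWide P) {g : P → ℝ} (hg : IsDMF g) (hinj : Function.Injective g)
    {a b m : P} (hab : a ⋖ b) (hga : g b < g a) (hmb : m < b) (hgm : g b < g m)
    (hma : m ≠ a) : gsum {x | m < x ∧ x < b ∧ g x < g b} = 0 := by
  obtain ⟨x0, h1, h2, h3⟩ := claimN hw hg hab hga hmb hgm hma
  have hSm : ∀ {y x : P}, m < y → y < x → x ∈ {x : P | x < b} → y ∈ {x : P | x < b} :=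
    fun _ hyx hx => lt_trans hyx hx
  have hSb : ∀ x ∈ {x : P | x < b}, g x ≠ g b := fun x hx h => hx.ne (hinj h)
  have hcd := claimD hw hg b (m := m) (S := {x : P | x < b}) hSm hSb
  obtain ⟨u0, hu0, hgu0, hu0x⟩ := hcd x0 h2 h1 h3
  have hu0mem : u0 ∈ {x | m < x ∧ x < b ∧ g x < g b} :=
    ⟨hu0.lt, lt_of_le_of_lt hu0x h2, hgu0⟩
  refine gsum_cone hu0mem ?_
  intro x hx
  obtain ⟨u', hu', hgu', hu'x⟩ := hcd x hx.2.1 hx.1 hx.2.2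
  have heq : u' = u0 := (hg m).2 ⟨hu', (hgu'.trans hgm).le⟩ ⟨hu0, (hgu0.trans hgm).le⟩
  exact Or.inr (heq ▸ hu'x)

end Claims

section Main
variable [PartialOrder P] [Fintype P]

lemma gsum_lt_eq (μ : P → ℕ) (hE : DownEulerian μ) {t : P} (ht : ¬ IsMin t) :
    gsum {x : P | x < t} = (-1 : ℤ) ^ (μ t) := by
  have h1 : chainSum (fun C : Finset P => ∀ x ∈ C, x ∈ ({x : P | x < t} : Set P))
      = 1 - gsum {x : P | x < t} := chainSum_eq_sub_gsum _
  have h2 : chainSum (fun C : Finset P => ∀ x ∈ C, x ∈ ({x : P | x < t} : Set P))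
      = (-1 : ℤ) ^ (μ t + 1) + 1 := hE t ht
  have h3 : ((-1 : ℤ)) ^ (μ t + 1) = -(-1 : ℤ) ^ (μ t) := by
    rw [pow_succ]
    ring
  rw [h2, h3] at h1
  linarith

lemma target_eq_gsum {g : P → ℝ} (hinj : Function.Injective g) (b : P) :
    chainSum (fun C : Finset P => b ∈ C ∧ ∀ x ∈ C, g x ≤ g b)
      = gsum ({x | x < b ∧ g x < g b} ∪ {x | b < x ∧ g x < g b}) := by
  rw [chainSum_eq_sum (F := Finset.univ.filter
      (fun C : Finset P => C.Nonempty ∧ IsChain (· ≤ ·) (↑C : Set P) ∧ b ∈ C ∧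
        ∀ x ∈ C, g x ≤ g b))
      (fun C => by simp only [Finset.mem_filter, Finset.mem_univ, true_and]),
    gsum_eq_sum (F := Finset.univ.filter
      (fun C : Finset P => IsChain (· ≤ ·) (↑C : Set P) ∧ ∀ x ∈ C,
        x ∈ ({x | x < b ∧ g x < g b} ∪ {x | b < x ∧ g x < g b} : Set P)))
      (fun C => by simp only [Finset.mem_filter, Finset.mem_univ, true_and])]
  refine Finset.sum_nbij' (fun C => C.erase b) (fun D => insert b D) ?_ ?_ ?_ ?_ ?_
  · intro C hC
    simp only [Finset.mem_filter, Finset.mem_univ, true_and] at hC ⊢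
    obtain ⟨-, hchain, hbC, hle⟩ := hC
    refine ⟨hchain.mono (Finset.coe_subset.mpr (Finset.erase_subset _ _)), ?_⟩
    intro x hx
    have hxC := Finset.mem_of_mem_erase hx
    have hxb : x ≠ b := Finset.ne_of_mem_erase hx
    have hglt : g x < g b := lt_of_le_of_ne (hle x hxC) (fun h => hxb (hinj h))
    rcases hchain (Finset.mem_coe.mpr hxC) (Finset.mem_coe.mpr hbC) hxb with h | h
    · exact Or.inl ⟨lt_of_le_of_ne h hxb, hglt⟩
    · exact Or.inr ⟨lt_of_le_of_ne h hxb.symm, hglt⟩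
  · intro D hD
    simp only [Finset.mem_filter, Finset.mem_univ, true_and] at hD ⊢
    obtain ⟨hchain, hsub⟩ := hD
    refine ⟨⟨b, Finset.mem_insert_self b D⟩, ?_, Finset.mem_insert_self b D, ?_⟩
    · rw [Finset.coe_insert]
      refine hchain.insert (fun y hy _ => ?_)
      rcases hsub y hy with h | h
      · exact Or.inr h.1.le
      · exact Or.inl h.1.le
    · intro x hx
      rcases Finset.mem_insert.mp hx with rfl | hx
      · exact le_rfl
      · rcases hsub x hx with h | h
        · exact h.2.le
        · exact h.2.le
  · intro C hC
    simp only [Finset.mem_filter, Finset.mem_univ, true_and] at hC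
    exact Finset.insert_erase hC.2.2.1
  · intro D hD
    simp only [Finset.mem_filter, Finset.mem_univ, true_and] at hD
    refine Finset.erase_insert (fun hbD => ?_)
    rcases hD.2 b hbD with h | h
    · exact lt_irrefl b h.1
    · exact lt_irrefl b h.1
  · intro C hC
    simp only [Finset.mem_filter, Finset.mem_univ, true_and] at hC
    rw [Finset.card_erase_of_mem hC.2.2.1]

end Main
-- appended to full.lean later
section CaseB
variable [PartialOrder P] [Fintype P]

lemma caseB (hw : TwoWide P) {g : P → ℝ} (hg : IsDMF g) (hinj : Function.Injective g)
    (μ : P → ℕ) (hμ : ParityRank μ) (hE : DownEulerian μ) {a b : P}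
    (hab : a ⋖ b) (hga : g b < g a) :
    gsum {x | x < b ∧ g x < g b} = 0 := by
  classical
  have hbmin : ¬ IsMin b := fun h => hab.lt.not_ge (h hab.lt.le)
  -- the big filter of chains below b
  set F : Finset (Finset P) := Finset.univ.filter
    (fun C : Finset P => IsChain (· ≤ ·) (↑C : Set P) ∧ ∀ x ∈ C, x < b) with hF
  have hFmem : ∀ C : Finset P,
      C ∈ F ↔ (IsChain (· ≤ ·) (↑C : Set P) ∧ ∀ x ∈ C, x < b) := by
    intro C
    rw [hF]
    simp only [Finset.mem_filter, Finset.mem_univ, true_and]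
  set q : Finset P → Prop := fun C => ∃ x ∈ C, g b < g x with hq
  -- the maximum selector
  set key : Finset P → P := fun C =>
    if h : ∃ m, m ∈ C ∧ g b < g m ∧ ∀ y ∈ C, g b < g y → y ≤ m then h.choose else b
    with hkey
  have hkeyspec : ∀ C : Finset P, IsChain (· ≤ ·) (↑C : Set P) → q C →
      key C ∈ C ∧ g b < g (key C) ∧ ∀ y ∈ C, g b < g y → y ≤ key C := by
    intro C hc hqC
    obtain ⟨x, hxC, hgx⟩ := hqC
    have hT : (C.filter (fun y => g b < g y)).Nonempty :=
      ⟨x, Finset.mem_filter.mpr ⟨hxC, hgx⟩⟩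
    obtain ⟨m, hm, hmax⟩ := chain_exists_max
      (hc.mono (Finset.coe_subset.mpr (Finset.filter_subset _ _))) hT
    have hex : ∃ m, m ∈ C ∧ g b < g m ∧ ∀ y ∈ C, g b < g y → y ≤ m :=
      ⟨m, (Finset.mem_filter.mp hm).1, (Finset.mem_filter.mp hm).2,
        fun y hy hgy => hmax y (Finset.mem_filter.mpr ⟨hy, hgy⟩)⟩
    rw [hkey]
    simp only [dif_pos hex]
    exact ⟨hex.choose_spec.1, hex.choose_spec.2.1, hex.choose_spec.2.2⟩
  -- membership of key in Mf
  set Mf : Finset P := Finset.univ.filter (fun x => x < b ∧ g b < g x) with hMf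
  have hMfmem : ∀ x : P, x ∈ Mf ↔ (x < b ∧ g b < g x) := by
    intro x
    rw [hMf]
    simp only [Finset.mem_filter, Finset.mem_univ, true_and]
  have haMf : a ∈ Mf := (hMfmem a).mpr ⟨hab.lt, hga⟩
  have hmaps : ∀ C ∈ F.filter q, key C ∈ Mf := by
    intro C hC
    obtain ⟨hCF, hqC⟩ := Finset.mem_filter.mp hC
    obtain ⟨hchain, hsub⟩ := (hFmem C).mp hCF
    obtain ⟨h1, h2, -⟩ := hkeyspec C hchain hqC
    exact (hMfmem _).mpr ⟨hsub _ h1, h2⟩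
  have hfib := Finset.sum_fiberwise_of_maps_to hmaps (fun C => (-1 : ℤ) ^ C.card)
  -- inner sums
  have hinner : ∀ m ∈ Mf, (∑ C ∈ (F.filter q).filter (fun C => key C = m),
      (-1 : ℤ) ^ C.card)
      = -(gsum {x : P | x < m} * gsum {x | m < x ∧ x < b ∧ g x < g b}) := by
    intro m hm
    obtain ⟨hmb, hgm⟩ := (hMfmem m).mp hm
    rw [← gsum_union (s := {x : P | x < m}) (t := {x | m < x ∧ x < b ∧ g x < g b})
      (fun x hx y hy => lt_trans hx hy.1)]
    rw [gsum_eq_sum (F := Finset.univ.filter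
        (fun D : Finset P => IsChain (· ≤ ·) (↑D : Set P) ∧ ∀ x ∈ D,
          x ∈ ({x : P | x < m} ∪ {x | m < x ∧ x < b ∧ g x < g b} : Set P)))
        (fun D => by simp only [Finset.mem_filter, Finset.mem_univ, true_and]),
      ← Finset.sum_neg_distrib]
    refine Finset.sum_nbij' (fun C => C.erase m) (fun D => insert m D) ?_ ?_ ?_ ?_ ?_
    · intro C hC
      simp only [Finset.mem_filter] at hC
      obtain ⟨⟨hCF, hqC⟩, hkeyC⟩ := hC
      obtain ⟨hchain, hsub⟩ := (hFmem C).mp hCF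
      obtain ⟨hmC, -, hmax⟩ := hkeyspec C hchain hqC
      rw [hkeyC] at hmC hmax
      simp only [Finset.mem_filter, Finset.mem_univ, true_and]
      refine ⟨hchain.mono (Finset.coe_subset.mpr (Finset.erase_subset _ _)), ?_⟩
      intro x hx
      have hxC := Finset.mem_of_mem_erase hx
      have hxm : x ≠ m := Finset.ne_of_mem_erase hx
      rcases hchain (Finset.mem_coe.mpr hxC) (Finset.mem_coe.mpr hmC) hxm with h | h
      · exact Or.inl (lt_of_le_of_ne h hxm)
      · refine Or.inr ⟨lt_of_le_of_ne h hxm.symm, hsub x hxC, ?_⟩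
        by_contra hge
        push_neg at hge
        have hne : g x ≠ g b := fun h' => (hsub x hxC).ne (hinj h')
        have : g b < g x := lt_of_le_of_ne hge (Ne.symm hne)
        exact absurd (hmax x hxC this) (lt_of_le_of_ne h hxm.symm).not_ge
    · intro D hD
      simp only [Finset.mem_filter, Finset.mem_univ, true_and] at hD
      obtain ⟨hchain, hsub⟩ := hD
      have hchain' : IsChain (· ≤ ·) (↑(insert m D) : Set P) := by
        rw [Finset.coe_insert]
        refine hchain.insert (fun y hy _ => ?_)
        rcases hsub y hy with h | h
        · exact Or.inr h.le
        · exact Or.inl h.1.le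
      have hsub' : ∀ x ∈ insert m D, x < b := by
        intro x hx
        rcases Finset.mem_insert.mp hx with rfl | hx
        · exact hmb
        · rcases hsub x hx with h | h
          · exact lt_trans h hmb
          · exact h.2.1
      have hqD : q (insert m D) := ⟨m, Finset.mem_insert_self m D, hgm⟩
      refine Finset.mem_filter.mpr ⟨Finset.mem_filter.mpr
        ⟨(hFmem _).mpr ⟨hchain', hsub'⟩, hqD⟩, ?_⟩
      obtain ⟨hk1, hk2, hk3⟩ := hkeyspec (insert m D) hchain' hqD
      have hmle : ∀ y ∈ insert m D, g b < g y → y ≤ m := by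
        intro y hy hgy
        rcases Finset.mem_insert.mp hy with rfl | hy
        · exact le_rfl
        · rcases hsub y hy with h | h
          · exact h.le
          · exact absurd hgy (asymm h.2.2)
      exact le_antisymm (hmle _ hk1 hk2) (hk3 m (Finset.mem_insert_self m D) hgm)
    · intro C hC
      simp only [Finset.mem_filter] at hC
      obtain ⟨⟨hCF, hqC⟩, hkeyC⟩ := hC
      obtain ⟨hchain, -⟩ := (hFmem C).mp hCF
      obtain ⟨hmC, -, -⟩ := hkeyspec C hchain hqC
      rw [hkeyC] at hmC
      exact Finset.insert_erase hmC
    · intro D hD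
      simp only [Finset.mem_filter, Finset.mem_univ, true_and] at hD
      refine Finset.erase_insert (fun hmD => ?_)
      rcases hD.2 m hmD with h | h
      · exact lt_irrefl m h
      · exact lt_irrefl m h.1
    · intro C hC
      simp only [Finset.mem_filter] at hC
      obtain ⟨⟨hCF, hqC⟩, hkeyC⟩ := hC
      obtain ⟨hchain, -⟩ := (hFmem C).mp hCF
      obtain ⟨hmC, -, -⟩ := hkeyspec C hchain hqC
      rw [hkeyC] at hmC
      have : C.card = (C.erase m).card + 1 := (Finset.card_erase_add_one hmC).symm
      rw [this, pow_succ]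
      ring
  -- the sum over fibers collapses to the fiber of a
  have hsumM : ∑ m ∈ Mf, (∑ C ∈ (F.filter q).filter (fun C => key C = m),
      (-1 : ℤ) ^ C.card) = -gsum {x : P | x < a} := by
    rw [Finset.sum_congr rfl hinner]
    rw [Finset.sum_eq_single a]
    · have hVa : gsum {x | a < x ∧ x < b ∧ g x < g b} = 1 :=
        gsum_of_forall_not (fun x hx => hab.2 hx.1 hx.2.1)
      rw [hVa, mul_one]
    · intro m hm hma
      obtain ⟨hmb, hgm⟩ := (hMfmem m).mp hm
      rw [Vm_zero hw hg hinj hab hga hmb hgm hma, mul_zero, neg_zero]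
    · intro h
      exact absurd haMf h
  -- the not-q part is gsum of L
  have hLpart : ∑ C ∈ F.filter (fun C => ¬ q C), (-1 : ℤ) ^ C.card
      = gsum {x | x < b ∧ g x < g b} := by
    rw [gsum_eq_sum (F := F.filter (fun C => ¬ q C)) ?_]
    intro C
    rw [Finset.mem_filter, hFmem C, hq]
    simp only [not_exists, not_and, Set.mem_setOf_eq]
    constructor
    · rintro ⟨⟨hc, hsub⟩, hnq⟩
      refine ⟨hc, fun x hx => ⟨hsub x hx, ?_⟩⟩
      have h1 : g x ≤ g b := not_lt.mp (hnq x hx)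
      exact lt_of_le_of_ne h1 (fun h => (hsub x hx).ne (hinj h))
    · rintro ⟨hc, hsub⟩
      exact ⟨⟨hc, fun x hx => (hsub x hx).1⟩, fun x hx => not_lt.mpr (hsub x hx).2.le⟩
  -- the total is gsum of {x < b}
  have htotal : ∑ C ∈ F, (-1 : ℤ) ^ C.card = gsum {x : P | x < b} := by
    rw [gsum_eq_sum (F := F) ?_]
    intro C
    rw [hFmem C]
    simp only [Set.mem_setOf_eq]
  have hsplit := Finset.sum_filter_add_sum_filter_not F q (fun C => (-1 : ℤ) ^ C.card)
  rw [hfib] at hsumM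
  -- combine
  have hcombine : gsum {x : P | x < b}
      = -gsum {x : P | x < a} + gsum {x | x < b ∧ g x < g b} := by
    rw [← htotal, ← hsplit, hsumM, hLpart]
  have hgb : gsum {x : P | x < b} = (-1 : ℤ) ^ (μ b) := gsum_lt_eq μ hE hbmin
  have hμb : μ b = 1 - μ a := hμ.2.2 a b hab
  have hμa : μ a ≤ 1 := hμ.1 a
  by_cases hamin : IsMin a
  · have hga0 : gsum {x : P | x < a} = 1 :=
      gsum_of_forall_not (fun x hx => hamin.not_lt hx)
    have hμa0 : μ a = 0 := hμ.2.1 a hamin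
    rw [hgb, hga0, hμb, hμa0] at hcombine
    norm_num at hcombine
    linarith
  · have hga0 : gsum {x : P | x < a} = (-1 : ℤ) ^ (μ a) := gsum_lt_eq μ hE hamin
    rw [hgb, hga0, hμb] at hcombine
    rcases Nat.le_one_iff_eq_zero_or_eq_one.mp hμa with h0 | h1
    · rw [h0] at hcombine
      norm_num at hcombine
      linarith
    · rw [h1] at hcombine
      norm_num at hcombine
      linarith

end CaseB

theorem stmt15 [PartialOrder P] [Fintype P] (hw : TwoWide P) (μ : P → ℕ)
    (hμ : ParityRank μ) (hE : DownEulerian μ) (g : P → ℝ) (hg : IsDMF g)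
    (hinj : Function.Injective g)
    (hcond : ∀ z x y w : P, z < x → x ⋖ y → y < w → g x < g y → g z < g y ∧ g x < g w)
    (b : P) (hb : ¬ IsCrit g b) :
    chainSum (fun C => b ∈ C ∧ ∀ x ∈ C, g x ≤ g b) = 0 := by
  rw [target_eq_gsum hinj b]
  simp only [IsCrit, not_and_or] at hb
  rcases hb with hb | hb
  · push_neg at hb
    obtain ⟨a, hab, hge⟩ := hb
    have hga : g b < g a := lt_of_le_of_ne hge (fun h => hab.lt.ne' (hinj h))
    rw [gsum_union (fun x hx y hy => lt_trans hx.1 hy.1),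
      caseB hw hg hinj μ hμ hE hab hga, zero_mul]
  · push_neg at hb
    obtain ⟨c, hbc, hle⟩ := hb
    have hgc : g c < g b := lt_of_le_of_ne hle (fun h => hbc.lt.ne' (hinj h))
    have hcU : c ∈ ({x | x < b ∧ g x < g b} ∪ {x | b < x ∧ g x < g b} : Set P) :=
      Or.inr ⟨hbc.lt, hgc⟩
    refine gsum_cone hcU ?_
    rintro x (hx | hx)
    · exact Or.inl (hx.1.le.trans hbc.lt.le)
    · have hSb : ∀ y ∈ {y : P | b < y}, g y ≠ g b := fun y hy h => hy.ne' (hinj h)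
      have hSm : ∀ {y z : P}, b < y → y < z → z ∈ {y : P | b < y} → y ∈ {y : P | b < y} :=
        fun hy _ _ => hy
      obtain ⟨u, hbu, hgu, hux⟩ := claimD hw hg b (m := b) (S := {y : P | b < y})
        hSm hSb x hx.1 hx.1 hx.2
      have huc : u = c := (hg b).2 ⟨hbu, hgu.le⟩ ⟨hbc, hgc.le⟩
      exact Or.inr (huc ▸ hux)
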